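/- Assume D is lenticular (γ₁ convex and γ₂ concave on I) and ζ < (√129 − 11)/4. Then there exists a Lipschitz continuous function u : D̄ → ℝ such that: (i) R_φ = ρ(Q) coincides with the left intrinsic graph S_u = {(u(y,t), y, t+2y·u(y,t)) : (y,t) ∈ D}; (ii) u = φ on ∂D. -/

import Mathlib

open Set

set_option maxHeartbeats 1600000

noncomputable section

/-- `Q_φ(s,λ) = λ - s + 2(γ₂(λ) - γ₁(s))(φ₂(λ) + φ₁(s))` from the paper. -/
def Qphi (γ₁ γ₂ φ₁ φ₂ : ℝ → ℝ) (s l : ℝ) : ℝ :=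
  l - s + 2 * (γ₂ l - γ₁ s) * (φ₂ l + φ₁ s)

/-- The boundary curve `p(s) = (φ(s), γ(s), s + 2γ(s)φ(s))` in `ℝ³ ≅ ℍ`. -/
def heisP (γ φ : ℝ → ℝ) (s : ℝ) : ℝ × ℝ × ℝ :=
  (φ s, γ s, s + 2 * γ s * φ s)

/-- The ruled parametrization `ρ(h,s) = (1-h)·p₁(s) + h·p₂(λ(s))`. -/
def heisRho (γ₁ γ₂ φ₁ φ₂ lam : ℝ → ℝ) (w : ℝ × ℝ) : ℝ × ℝ × ℝ :=
  (1 - w.1) • heisP γ₁ φ₁ w.2 + w.1 • heisP γ₂ φ₂ (lam w.2)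

/-- The lenticular domain `D = {(y,t) : t ∈ (0,t̄), γ₁(t) < y < γ₂(t)}`. -/
def lensD (γ₁ γ₂ : ℝ → ℝ) (tb : ℝ) : Set (ℝ × ℝ) :=
  {w | w.2 ∈ Set.Ioo 0 tb ∧ γ₁ w.2 < w.1 ∧ w.1 < γ₂ w.2}




lemma hh_mul_sub (a a' b b' : ℝ) :
    |a * b - a' * b'| ≤ |a - a'| * |b| + |a'| * |b - b'| := by
  have h : a * b - a' * b' = (a - a') * b + a' * (b - b') := by ring
  rw [h]
  calc |(a - a') * b + a' * (b - b')| ≤ |(a - a') * b| + |a' * (b - b')| := abs_add_le _ _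
    _ = |a - a'| * |b| + |a'| * |b - b'| := by rw [abs_mul, abs_mul]

def qratio (w d : ℝ) : ℝ := if d = 0 then 0 else w / d

lemma qratio_zero (d : ℝ) : qratio 0 d = 0 := by
  unfold qratio; split <;> simp

lemma qratio_nonneg {w d : ℝ} (hw : 0 ≤ w) (hd : 0 ≤ d) : 0 ≤ qratio w d := by
  unfold qratio; split
  · exact le_refl 0
  · exact div_nonneg hw hd

lemma qratio_le_one {w d : ℝ} (hw : 0 ≤ w) (hwd : w ≤ d) : qratio w d ≤ 1 := by
  unfold qratio; split
  · exact zero_le_one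
  · rename_i hd
    have hdpos : 0 < d := lt_of_le_of_ne (hw.trans hwd) (Ne.symm hd)
    exact (div_le_one hdpos).mpr hwd

lemma qratio_self {d : ℝ} (hd : d ≠ 0) : qratio d d = 1 := by
  unfold qratio; rw [if_neg hd]; field_simp

lemma qratio_diff {w d w' d' : ℝ} (hw : 0 ≤ w) (hwd : w ≤ d) (hw' : 0 ≤ w') (hwd' : w' ≤ d')
    (hd : 0 < d) : |qratio w d - qratio w' d'| * d ≤ |w - w'| + |d - d'| := by
  by_cases hd' : d' = 0
  · have hw'0 : w' = 0 := le_antisymm (hd' ▸ hwd') hw'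
    rw [hd', hw'0, qratio_zero, qratio, if_neg hd.ne', sub_zero, abs_div,
      abs_of_pos hd, div_mul_cancel₀ _ hd.ne']
    have : |w - 0| = |w| := by rw [sub_zero]
    rw [sub_zero]
    calc |w| ≤ |w| + |d - 0| := le_add_of_nonneg_right (abs_nonneg _)
      _ = _ := by rw [sub_zero]
  · have hd'pos : 0 < d' := lt_of_le_of_ne (hw'.trans hwd') (Ne.symm hd')
    have he : qratio w d - qratio w' d' = ((w - w') * d' - w' * (d - d')) / (d * d') := by
      rw [qratio, if_neg hd.ne', qratio, if_neg hd']
      field_simp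
      ring
    rw [he, abs_div, abs_of_pos (mul_pos hd hd'pos)]
    rw [div_mul_eq_mul_div, div_le_iff₀ (mul_pos hd hd'pos)]
    have h1 : |(w - w') * d' - w' * (d - d')| ≤ |w - w'| * d' + w' * |d - d'| := by
      calc |(w - w') * d' - w' * (d - d')| ≤ |(w - w') * d'| + |w' * (d - d')| := abs_sub _ _
        _ = |w - w'| * d' + w' * |d - d'| := by
            rw [abs_mul, abs_mul, abs_of_pos hd'pos, abs_of_nonneg hw']
    calc |(w - w') * d' - w' * (d - d')| * d ≤ (|w - w'| * d' + w' * |d - d'|) * d := by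
          apply mul_le_mul_of_nonneg_right h1 hd.le
      _ ≤ (|w - w'| * d' + d' * |d - d'|) * d := by
          apply mul_le_mul_of_nonneg_right _ hd.le
          apply add_le_add_right
          exact mul_le_mul_of_nonneg_right hwd' (abs_nonneg _)
      _ = (|w - w'| + |d - d'|) * (d * d') := by ring

lemma qr_mul_diff {w d w' d' : ℝ} (hw : 0 ≤ w) (hwd : w ≤ d) (hw' : 0 ≤ w') (hwd' : w' ≤ d') :
    |w * qratio w d - w' * qratio w' d'| ≤ 2 * |w - w'| + |d - d'| := by
  by_cases hd : d = 0
  · have hw0 : w = 0 := le_antisymm (hd ▸ hwd) hw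
    rw [hw0, qratio_zero, zero_mul, zero_sub, abs_neg, abs_mul,
      abs_of_nonneg hw', abs_of_nonneg (qratio_nonneg hw' (hw'.trans hwd'))]
    have h1 : w' * qratio w' d' ≤ w' * 1 := by
      apply mul_le_mul_of_nonneg_left (qratio_le_one hw' hwd') hw'
    have h2 : w' = |(0:ℝ) - w'| := by rw [zero_sub, abs_neg, abs_of_nonneg hw']
    nlinarith [abs_nonneg ((0:ℝ) - w'), abs_nonneg (d - d'), abs_nonneg ((0:ℝ) - w')]
  · have hdpos : 0 < d := lt_of_le_of_ne (hw.trans hwd) (Ne.symm hd)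
    have key : |qratio w d - qratio w' d'| * d ≤ |w - w'| + |d - d'| :=
      qratio_diff hw hwd hw' hwd' hdpos
    have hdec : w * qratio w d - w' * qratio w' d'
        = (w - w') * qratio w d + w' * (qratio w d - qratio w' d') := by ring
    rw [hdec]
    have hq1 : |qratio w d| ≤ 1 :=
      abs_le.mpr ⟨by linarith [qratio_nonneg hw hdpos.le], qratio_le_one hw hwd⟩
    have h1 : |(w - w') * qratio w d| ≤ |w - w'| := by
      rw [abs_mul]
      calc |w - w'| * |qratio w d| ≤ |w - w'| * 1 := by
            exact mul_le_mul_of_nonneg_left hq1 (abs_nonneg _)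
        _ = |w - w'| := mul_one _
    have h2 : |w' * (qratio w d - qratio w' d')| ≤ |w - w'| + |d - d'| := by
      by_cases hd' : d' = 0
      · have hw'0 : w' = 0 := le_antisymm (hd' ▸ hwd') hw'
        rw [hw'0, zero_mul, abs_zero]
        positivity
      · have hd'pos : 0 < d' := lt_of_le_of_ne (hw'.trans hwd') (Ne.symm hd')
        have key' : |qratio w' d' - qratio w d| * d' ≤ |w' - w| + |d' - d| :=
          qratio_diff hw' hwd' hw hwd hd'pos
        rw [abs_sub_comm (qratio w' d') _, abs_sub_comm w' w, abs_sub_comm d' d] at key'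
        rw [abs_mul, abs_of_nonneg hw']
        calc w' * |qratio w d - qratio w' d'| ≤ d' * |qratio w d - qratio w' d'| :=
              mul_le_mul_of_nonneg_right hwd' (abs_nonneg _)
          _ = |qratio w d - qratio w' d'| * d' := mul_comm _ _
          _ ≤ |w - w'| + |d - d'| := key'
    calc |(w - w') * qratio w d + w' * (qratio w d - qratio w' d')|
        ≤ |(w - w') * qratio w d| + |w' * (qratio w d - qratio w' d')| := abs_add_le _ _
      _ ≤ |w - w'| + (|w - w'| + |d - d'|) := add_le_add h1 h2
      _ = 2 * |w - w'| + |d - d'| := by ring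

/-- fiber width -/
def dlf (γ₁ γ₂ lam : ℝ → ℝ) (s : ℝ) : ℝ := γ₂ (lam s) - γ₁ s

/-- clamped fiber coordinate -/
def Wf (γ₁ γ₂ lam : ℝ → ℝ) (y s : ℝ) : ℝ := max 0 (min (y - γ₁ s) (dlf γ₁ γ₂ lam s))

def qg (γ₁ γ₂ lam : ℝ → ℝ) (y s : ℝ) : ℝ := qratio (Wf γ₁ γ₂ lam y s) (dlf γ₁ γ₂ lam s)

/-- correction term -/
def Ef (γ₁ γ₂ φ₁ φ₂ lam : ℝ → ℝ) (y s : ℝ) : ℝ :=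
  4 * Wf γ₁ γ₂ lam y s * φ₁ s
    + 2 * (Wf γ₁ γ₂ lam y s * qg γ₁ γ₂ lam y s) * (φ₂ (lam s) - φ₁ s)

/-- the `t`-coordinate along the fiber over `s` at height `y` -/
def Tf (γ₁ γ₂ φ₁ φ₂ lam : ℝ → ℝ) (y s : ℝ) : ℝ := s - Ef γ₁ γ₂ φ₁ φ₂ lam y s

/-- the `x`-coordinate (graph function value) along the fiber -/
def Ug (γ₁ γ₂ φ₁ φ₂ lam : ℝ → ℝ) (y s : ℝ) : ℝ :=
  φ₁ s + qg γ₁ γ₂ lam y s * (φ₂ (lam s) - φ₁ s)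
/-- the ruled surface `R_φ` is the left intrinsic graph of a Lipschitz
function `u` on `D` with boundary value `φ`. -/
theorem stmt_6 (tb : ℝ) (htb : 0 < tb)
    (γ₁ γ₂ φ₁ φ₂ : ℝ → ℝ) (Mγ Lγ Mφ Lφ : NNReal)
    (hγ₁lip : LipschitzOnWith Lγ γ₁ (Set.Icc 0 tb))
    (hγ₂lip : LipschitzOnWith Lγ γ₂ (Set.Icc 0 tb))
    (hγ₁bd : ∀ s ∈ Set.Icc 0 tb, |γ₁ s| ≤ (Mγ : ℝ))
    (hγ₂bd : ∀ s ∈ Set.Icc 0 tb, |γ₂ s| ≤ (Mγ : ℝ))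
    (hφ₁lip : LipschitzOnWith Lφ φ₁ (Set.Icc 0 tb))
    (hφ₂lip : LipschitzOnWith Lφ φ₂ (Set.Icc 0 tb))
    (hφ₁bd : ∀ s ∈ Set.Icc 0 tb, |φ₁ s| ≤ (Mφ : ℝ))
    (hφ₂bd : ∀ s ∈ Set.Icc 0 tb, |φ₂ s| ≤ (Mφ : ℝ))
    (hsign : ∀ t ∈ Set.Ioo 0 tb, γ₁ t < 0 ∧ 0 < γ₂ t)
    (hγ₁0 : γ₁ 0 = 0) (hγ₁t : γ₁ tb = 0) (hγ₂0 : γ₂ 0 = 0) (hγ₂t : γ₂ tb = 0)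
    (hφ0 : φ₁ 0 = φ₂ 0) (hφt : φ₁ tb = φ₂ tb)
    (hconv : ConvexOn ℝ (Set.Icc 0 tb) γ₁)
    (hconc : ConcaveOn ℝ (Set.Icc 0 tb) γ₂)
    (zeta : ℝ) (hzdef : zeta = 4 * ((Mγ : ℝ) + (Lγ : ℝ)) * ((Mφ : ℝ) + (Lφ : ℝ)))
    (hzeta : zeta < (Real.sqrt 129 - 11) / 4)
    (lam : ℝ → ℝ)
    (hlam_bij : Set.BijOn lam (Set.Icc 0 tb) (Set.Icc 0 tb))
    (hlam_mono : StrictMonoOn lam (Set.Icc 0 tb))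
    (hlam_sol : ∀ s ∈ Set.Icc 0 tb, Qphi γ₁ γ₂ φ₁ φ₂ s (lam s) = 0)
    (hlam0 : lam 0 = 0) (hlamt : lam tb = tb)
    :
    ∃ u : ℝ × ℝ → ℝ,
      -- (ii) u is Lipschitz continuous on D̄
      (∃ K : NNReal, LipschitzOnWith K u (closure (lensD γ₁ γ₂ tb))) ∧
      -- (i) R_φ = S_u
      (heisRho γ₁ γ₂ φ₁ φ₂ lam '' (Set.Ioo (0:ℝ) 1 ×ˢ Set.Ioo (0:ℝ) tb)
        = (fun w : ℝ × ℝ => (u w, w.1, w.2 + 2 * w.1 * u w)) '' lensD γ₁ γ₂ tb) ∧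
      -- (iii) u = φ on ∂D
      (∀ s ∈ Set.Icc 0 tb, u (γ₁ s, s) = φ₁ s ∧ u (γ₂ s, s) = φ₂ s) := by
  classical
  set M := (Mγ : ℝ) with hM_def
  set L := (Lγ : ℝ) with hL_def
  set m := (Mφ : ℝ) with hm_def
  set l := (Lφ : ℝ) with hl_def
  have hM0 : 0 ≤ M := Mγ.coe_nonneg
  have hL0 : 0 ≤ L := Lγ.coe_nonneg
  have hm0 : 0 ≤ m := Mφ.coe_nonneg
  have hl0 : 0 ≤ l := Lφ.coe_nonneg
  have hz0 : 0 ≤ zeta := by rw [hzdef]; positivity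
  have hz11 : zeta < 1/11 := by
    have h129 : Real.sqrt 129 ≤ 125/11 := by
      rw [show (125/11:ℝ) = Real.sqrt ((125/11)^2) from (Real.sqrt_sq (by norm_num)).symm]
      exact Real.sqrt_le_sqrt (by norm_num)
    linarith
  have h0m : (0:ℝ) ∈ Icc (0:ℝ) tb := left_mem_Icc.mpr htb.le
  have htbm : tb ∈ Icc (0:ℝ) tb := right_mem_Icc.mpr htb.le
  have hlmem : ∀ s ∈ Icc (0:ℝ) tb, lam s ∈ Icc (0:ℝ) tb := fun s hs => hlam_bij.mapsTo hs
  have hQs : ∀ s ∈ Icc (0:ℝ) tb,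
      lam s - s + 2*(γ₂ (lam s) - γ₁ s)*(φ₂ (lam s) + φ₁ s) = 0 := by
    intro s hs; have := hlam_sol s hs; simpa [Qphi] using this
  have hg1lip : ∀ s ∈ Icc (0:ℝ) tb, ∀ s' ∈ Icc (0:ℝ) tb, |γ₁ s - γ₁ s'| ≤ L * |s - s'| := by
    intro s hs s' hs'
    have := hγ₁lip.dist_le_mul s hs s' hs'
    simpa [Real.dist_eq] using this
  have hg2lip : ∀ s ∈ Icc (0:ℝ) tb, ∀ s' ∈ Icc (0:ℝ) tb, |γ₂ s - γ₂ s'| ≤ L * |s - s'| := by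
    intro s hs s' hs'
    have := hγ₂lip.dist_le_mul s hs s' hs'
    simpa [Real.dist_eq] using this
  have hf1lip : ∀ s ∈ Icc (0:ℝ) tb, ∀ s' ∈ Icc (0:ℝ) tb, |φ₁ s - φ₁ s'| ≤ l * |s - s'| := by
    intro s hs s' hs'
    have := hφ₁lip.dist_le_mul s hs s' hs'
    simpa [Real.dist_eq] using this
  have hf2lip : ∀ s ∈ Icc (0:ℝ) tb, ∀ s' ∈ Icc (0:ℝ) tb, |φ₂ s - φ₂ s'| ≤ l * |s - s'| := by
    intro s hs s' hs'
    have := hφ₂lip.dist_le_mul s hs s' hs'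
    simpa [Real.dist_eq] using this
  have hLMz : L*m + M*l ≤ zeta/4 := by
    rw [hzdef]
    nlinarith [mul_nonneg hM0 hm0, mul_nonneg hL0 hl0]
  have hprod : ∀ s ∈ Icc (0:ℝ) tb, ∀ s' ∈ Icc (0:ℝ) tb,
      |(γ₂ (lam s) - γ₁ s)*(φ₂ (lam s) + φ₁ s)
        - (γ₂ (lam s') - γ₁ s')*(φ₂ (lam s') + φ₁ s')|
      ≤ 2*(L*m + M*l)*(|lam s - lam s'| + |s - s'|) := by
    intro s hs s' hs'
    have hPd : |(γ₂ (lam s) - γ₁ s) - (γ₂ (lam s') - γ₁ s')|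
        ≤ L*(|lam s - lam s'| + |s - s'|) := by
      rw [show (γ₂ (lam s) - γ₁ s) - (γ₂ (lam s') - γ₁ s')
        = (γ₂ (lam s) - γ₂ (lam s')) - (γ₁ s - γ₁ s') from by ring]
      calc |(γ₂ (lam s) - γ₂ (lam s')) - (γ₁ s - γ₁ s')|
          ≤ |γ₂ (lam s) - γ₂ (lam s')| + |γ₁ s - γ₁ s'| := abs_sub _ _
        _ ≤ L*|lam s - lam s'| + L*|s - s'| :=
            add_le_add (hg2lip _ (hlmem s hs) _ (hlmem s' hs')) (hg1lip s hs s' hs')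
        _ = L*(|lam s - lam s'| + |s - s'|) := by ring
    have hQd : |(φ₂ (lam s) + φ₁ s) - (φ₂ (lam s') + φ₁ s')|
        ≤ l*(|lam s - lam s'| + |s - s'|) := by
      rw [show (φ₂ (lam s) + φ₁ s) - (φ₂ (lam s') + φ₁ s')
        = (φ₂ (lam s) - φ₂ (lam s')) + (φ₁ s - φ₁ s') from by ring]
      calc |(φ₂ (lam s) - φ₂ (lam s')) + (φ₁ s - φ₁ s')|
          ≤ |φ₂ (lam s) - φ₂ (lam s')| + |φ₁ s - φ₁ s'| := abs_add_le _ _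
        _ ≤ l*|lam s - lam s'| + l*|s - s'| :=
            add_le_add (hf2lip _ (hlmem s hs) _ (hlmem s' hs')) (hf1lip s hs s' hs')
        _ = l*(|lam s - lam s'| + |s - s'|) := by ring
    have hPb : |γ₂ (lam s') - γ₁ s'| ≤ 2*M := by
      calc |γ₂ (lam s') - γ₁ s'| ≤ |γ₂ (lam s')| + |γ₁ s'| := abs_sub _ _
        _ ≤ M + M := add_le_add (hγ₂bd _ (hlmem s' hs')) (hγ₁bd s' hs')
        _ = 2*M := by ring
    have hQb : |φ₂ (lam s) + φ₁ s| ≤ 2*m := by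
      calc |φ₂ (lam s) + φ₁ s| ≤ |φ₂ (lam s)| + |φ₁ s| := abs_add_le _ _
        _ ≤ m + m := add_le_add (hφ₂bd _ (hlmem s hs)) (hφ₁bd s hs)
        _ = 2*m := by ring
    calc |(γ₂ (lam s) - γ₁ s)*(φ₂ (lam s) + φ₁ s)
        - (γ₂ (lam s') - γ₁ s')*(φ₂ (lam s') + φ₁ s')|
        ≤ |(γ₂ (lam s) - γ₁ s) - (γ₂ (lam s') - γ₁ s')| * |φ₂ (lam s) + φ₁ s|
          + |γ₂ (lam s') - γ₁ s'| * |(φ₂ (lam s) + φ₁ s) - (φ₂ (lam s') + φ₁ s')| :=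
          hh_mul_sub _ _ _ _
      _ ≤ (L*(|lam s - lam s'| + |s - s'|)) * (2*m)
          + (2*M) * (l*(|lam s - lam s'| + |s - s'|)) := by
          have b1 := mul_le_mul hPd hQb (abs_nonneg _) (by positivity)
          have b2 := mul_le_mul hPb hQd (abs_nonneg _) (by positivity)
          linarith
      _ = 2*(L*m + M*l)*(|lam s - lam s'| + |s - s'|) := by ring
  have hllip : ∀ s ∈ Icc (0:ℝ) tb, ∀ s' ∈ Icc (0:ℝ) tb,
      |lam s - lam s'| ≤ 6/5 * |s - s'| := by
    intro s hs s' hs'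
    have e1 := hQs s hs
    have e2 := hQs s' hs'
    have hkey : |lam s - lam s'| ≤ |s - s'|
        + 2*(2*(L*m + M*l)*(|lam s - lam s'| + |s - s'|)) := by
      have hid : lam s - lam s' = (s - s')
          - ((γ₂ (lam s) - γ₁ s)*(φ₂ (lam s) + φ₁ s)
             - (γ₂ (lam s') - γ₁ s')*(φ₂ (lam s') + φ₁ s')) * 2 := by
        linear_combination e1 - e2
      calc |lam s - lam s'| = |(s - s') - ((γ₂ (lam s) - γ₁ s)*(φ₂ (lam s) + φ₁ s)
             - (γ₂ (lam s') - γ₁ s')*(φ₂ (lam s') + φ₁ s')) * 2| := by rw [hid]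
        _ ≤ |s - s'| + |((γ₂ (lam s) - γ₁ s)*(φ₂ (lam s) + φ₁ s)
             - (γ₂ (lam s') - γ₁ s')*(φ₂ (lam s') + φ₁ s')) * 2| := abs_sub _ _
        _ ≤ |s - s'| + 2*(2*(L*m + M*l)*(|lam s - lam s'| + |s - s'|)) := by
            rw [abs_mul, show |(2:ℝ)| = 2 from by norm_num]
            have := hprod s hs s' hs'
            linarith
    have hsm : 4*(L*m + M*l) ≤ 1/11 := by linarith
    have hmul : (4*(L*m + M*l)) * (|lam s - lam s'| + |s - s'|)
        ≤ (1/11) * (|lam s - lam s'| + |s - s'|) :=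
      mul_le_mul_of_nonneg_right hsm (by positivity)
    linarith
  have hlrev : ∀ s ∈ Icc (0:ℝ) tb, ∀ s' ∈ Icc (0:ℝ) tb,
      |s - s'| ≤ 6/5 * |lam s - lam s'| := by
    intro s hs s' hs'
    have e1 := hQs s hs
    have e2 := hQs s' hs'
    have hkey : |s - s'| ≤ |lam s - lam s'|
        + 2*(2*(L*m + M*l)*(|lam s - lam s'| + |s - s'|)) := by
      have hid : s - s' = (lam s - lam s')
          + ((γ₂ (lam s) - γ₁ s)*(φ₂ (lam s) + φ₁ s)
             - (γ₂ (lam s') - γ₁ s')*(φ₂ (lam s') + φ₁ s')) * 2 := by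
        linear_combination e2 - e1
      calc |s - s'| = |(lam s - lam s') + ((γ₂ (lam s) - γ₁ s)*(φ₂ (lam s) + φ₁ s)
             - (γ₂ (lam s') - γ₁ s')*(φ₂ (lam s') + φ₁ s')) * 2| := by rw [hid]
        _ ≤ |lam s - lam s'| + |((γ₂ (lam s) - γ₁ s)*(φ₂ (lam s) + φ₁ s)
             - (γ₂ (lam s') - γ₁ s')*(φ₂ (lam s') + φ₁ s')) * 2| := abs_add_le _ _
        _ ≤ |lam s - lam s'| + 2*(2*(L*m + M*l)*(|lam s - lam s'| + |s - s'|)) := by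
            rw [abs_mul, show |(2:ℝ)| = 2 from by norm_num]
            have := hprod s hs s' hs'
            linarith
    have hsm : 4*(L*m + M*l) ≤ 1/11 := by linarith
    have hmul : (4*(L*m + M*l)) * (|lam s - lam s'| + |s - s'|)
        ≤ (1/11) * (|lam s - lam s'| + |s - s'|) :=
      mul_le_mul_of_nonneg_right hsm (by positivity)
    linarith
  have hγ₂nn : ∀ τ ∈ Icc (0:ℝ) tb, 0 ≤ γ₂ τ := by
    intro τ hτ
    rcases eq_or_lt_of_le hτ.1 with h | h
    · rw [← h, hγ₂0]
    rcases eq_or_lt_of_le hτ.2 with h2 | h2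
    · rw [h2, hγ₂t]
    exact (hsign τ ⟨h, h2⟩).2.le
  have hγ₁np : ∀ τ ∈ Icc (0:ℝ) tb, γ₁ τ ≤ 0 := by
    intro τ hτ
    rcases eq_or_lt_of_le hτ.1 with h | h
    · rw [← h, hγ₁0]
    rcases eq_or_lt_of_le hτ.2 with h2 | h2
    · rw [h2, hγ₁t]
    exact (hsign τ ⟨h, h2⟩).1.le
  have hlIoo : ∀ s ∈ Ioo (0:ℝ) tb, lam s ∈ Ioo (0:ℝ) tb := by
    intro s hs
    constructor
    · have := hlam_mono h0m ⟨hs.1.le, hs.2.le⟩ hs.1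
      rwa [hlam0] at this
    · have := hlam_mono ⟨hs.1.le, hs.2.le⟩ htbm hs.2
      rwa [hlamt] at this
  have hdlnn : ∀ s ∈ Icc (0:ℝ) tb, 0 ≤ dlf γ₁ γ₂ lam s := by
    intro s hs
    have h1 := hγ₂nn _ (hlmem s hs)
    have h2 := hγ₁np s hs
    simp only [dlf]; linarith
  have hdlpos : ∀ s ∈ Ioo (0:ℝ) tb, 0 < dlf γ₁ γ₂ lam s := by
    intro s hs
    have h1 := (hsign _ (hlIoo s hs)).2
    have h2 := (hsign s hs).1
    simp only [dlf]; linarith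
  have hdlb : ∀ s ∈ Icc (0:ℝ) tb, dlf γ₁ γ₂ lam s ≤ 2*M := by
    intro s hs
    have h1 := hγ₂bd _ (hlmem s hs)
    have h2 := hγ₁bd s hs
    have h3 := le_abs_self (γ₂ (lam s))
    have h4 := neg_abs_le (γ₁ s)
    simp only [dlf]; linarith
  have hdllip : ∀ s ∈ Icc (0:ℝ) tb, ∀ s' ∈ Icc (0:ℝ) tb,
      |dlf γ₁ γ₂ lam s - dlf γ₁ γ₂ lam s'| ≤ (11/5)*L*|s - s'| := by
    intro s hs s' hs'
    have h1 := hg2lip _ (hlmem s hs) _ (hlmem s' hs')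
    have h2 := hg1lip s hs s' hs'
    have h3 := hllip s hs s' hs'
    calc |dlf γ₁ γ₂ lam s - dlf γ₁ γ₂ lam s'|
        = |(γ₂ (lam s) - γ₂ (lam s')) - (γ₁ s - γ₁ s')| := by
          simp only [dlf]; ring_nf
      _ ≤ |γ₂ (lam s) - γ₂ (lam s')| + |γ₁ s - γ₁ s'| := abs_sub _ _
      _ ≤ (11/5)*L*|s - s'| := by
          have h5 := mul_le_mul_of_nonneg_left h3 hL0
          linarith
  have hWnn : ∀ y s : ℝ, 0 ≤ Wf γ₁ γ₂ lam y s := fun y s => le_max_left 0 _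
  have hWled : ∀ y : ℝ, ∀ s ∈ Icc (0:ℝ) tb, Wf γ₁ γ₂ lam y s ≤ dlf γ₁ γ₂ lam s :=
    fun y s hs => max_le (hdlnn s hs) (min_le_right _ _)
  have hWb : ∀ y : ℝ, ∀ s ∈ Icc (0:ℝ) tb, Wf γ₁ γ₂ lam y s ≤ 2*M :=
    fun y s hs => (hWled y s hs).trans (hdlb s hs)
  have hWdiff : ∀ y y' : ℝ, ∀ s ∈ Icc (0:ℝ) tb, ∀ s' ∈ Icc (0:ℝ) tb,
      |Wf γ₁ γ₂ lam y s - Wf γ₁ γ₂ lam y' s'| ≤ |y - y'| + (11/5)*L*|s - s'| := by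
    intro y y' s hs s' hs'
    have h1 : |Wf γ₁ γ₂ lam y s - Wf γ₁ γ₂ lam y' s'|
        ≤ max |(0:ℝ) - 0| |min (y - γ₁ s) (dlf γ₁ γ₂ lam s)
            - min (y' - γ₁ s') (dlf γ₁ γ₂ lam s')| :=
      abs_max_sub_max_le_max _ _ _ _
    have h2 : |min (y - γ₁ s) (dlf γ₁ γ₂ lam s) - min (y' - γ₁ s') (dlf γ₁ γ₂ lam s')|
        ≤ max |(y - γ₁ s) - (y' - γ₁ s')| |dlf γ₁ γ₂ lam s - dlf γ₁ γ₂ lam s'| :=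
      abs_min_sub_min_le_max _ _ _ _
    have h3 : |(y - γ₁ s) - (y' - γ₁ s')| ≤ |y - y'| + L*|s - s'| := by
      calc |(y - γ₁ s) - (y' - γ₁ s')| = |(y - y') - (γ₁ s - γ₁ s')| := by ring_nf
        _ ≤ |y - y'| + |γ₁ s - γ₁ s'| := abs_sub _ _
        _ ≤ |y - y'| + L*|s - s'| := by linarith [hg1lip s hs s' hs']
    have h4 := hdllip s hs s' hs'
    have h5 : max |(y - γ₁ s) - (y' - γ₁ s')| |dlf γ₁ γ₂ lam s - dlf γ₁ γ₂ lam s'|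
        ≤ |y - y'| + (11/5)*L*|s - s'| := by
      apply max_le
      · have : L*|s - s'| ≤ (11/5)*L*|s - s'| := by
          have := mul_nonneg hL0 (abs_nonneg (s - s'))
          linarith
        linarith
      · have : (0:ℝ) ≤ |y - y'| := abs_nonneg _
        linarith
    have h6 : |(0:ℝ) - 0| = 0 := by norm_num
    calc |Wf γ₁ γ₂ lam y s - Wf γ₁ γ₂ lam y' s'|
        ≤ max |(0:ℝ) - 0| |min (y - γ₁ s) (dlf γ₁ γ₂ lam s)
            - min (y' - γ₁ s') (dlf γ₁ γ₂ lam s')| := h1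
      _ ≤ |y - y'| + (11/5)*L*|s - s'| := by
          apply max_le
          · rw [h6]; positivity
          · exact h2.trans h5
  have hq0 : ∀ y : ℝ, ∀ s ∈ Icc (0:ℝ) tb, 0 ≤ qg γ₁ γ₂ lam y s :=
    fun y s hs => qratio_nonneg (hWnn y s) (hdlnn s hs)
  have hq1 : ∀ y : ℝ, ∀ s ∈ Icc (0:ℝ) tb, qg γ₁ γ₂ lam y s ≤ 1 :=
    fun y s hs => qratio_le_one (hWnn y s) (hWled y s hs)
  have hf1b : ∀ s ∈ Icc (0:ℝ) tb, |φ₁ s| ≤ m := hφ₁bd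
  have hf2b : ∀ s ∈ Icc (0:ℝ) tb, |φ₂ (lam s)| ≤ m := fun s hs => hφ₂bd _ (hlmem s hs)
  have hf21b : ∀ s ∈ Icc (0:ℝ) tb, |φ₂ (lam s) - φ₁ s| ≤ 2*m := by
    intro s hs
    calc |φ₂ (lam s) - φ₁ s| ≤ |φ₂ (lam s)| + |φ₁ s| := abs_sub _ _
      _ ≤ m + m := add_le_add (hf2b s hs) (hf1b s hs)
      _ = 2*m := by ring
  have hf21lip : ∀ s ∈ Icc (0:ℝ) tb, ∀ s' ∈ Icc (0:ℝ) tb,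
      |(φ₂ (lam s) - φ₁ s) - (φ₂ (lam s') - φ₁ s')| ≤ (11/5)*l*|s - s'| := by
    intro s hs s' hs'
    have h1 := hf2lip _ (hlmem s hs) _ (hlmem s' hs')
    have h2 := hf1lip s hs s' hs'
    have h3 := hllip s hs s' hs'
    calc |(φ₂ (lam s) - φ₁ s) - (φ₂ (lam s') - φ₁ s')|
        = |(φ₂ (lam s) - φ₂ (lam s')) - (φ₁ s - φ₁ s')| := by ring_nf
      _ ≤ |φ₂ (lam s) - φ₂ (lam s')| + |φ₁ s - φ₁ s'| := abs_sub _ _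
      _ ≤ (11/5)*l*|s - s'| := by
          have h5 := mul_le_mul_of_nonneg_left h3 hl0
          linarith
  have hLmz : 12*L*m ≤ 3*zeta := by
    rw [hzdef]
    nlinarith [mul_nonneg hM0 hm0, mul_nonneg hM0 hl0, mul_nonneg hL0 hl0]
  have hEs : ∀ y : ℝ, ∀ s ∈ Icc (0:ℝ) tb, ∀ s' ∈ Icc (0:ℝ) tb,
      |Ef γ₁ γ₂ φ₁ φ₂ lam y s - Ef γ₁ γ₂ φ₁ φ₂ lam y s'| ≤ 4/5*|s - s'| := by
    intro y s hs s' hs'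
    have hWd : |Wf γ₁ γ₂ lam y s - Wf γ₁ γ₂ lam y s'| ≤ (11/5)*L*|s - s'| := by
      have := hWdiff y y s hs s' hs'
      simpa using this
    have hrd : |Wf γ₁ γ₂ lam y s * qg γ₁ γ₂ lam y s
        - Wf γ₁ γ₂ lam y s' * qg γ₁ γ₂ lam y s'| ≤ (33/5)*L*|s - s'| := by
      have h0 := qr_mul_diff (hWnn y s) (hWled y s hs) (hWnn y s') (hWled y s' hs')
      have h1 := hdllip s hs s' hs'
      simp only [qg] at h0 ⊢
      linarith
    have t1 : |Wf γ₁ γ₂ lam y s * φ₁ s - Wf γ₁ γ₂ lam y s' * φ₁ s'|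
        ≤ (11/5)*L*|s - s'| *m + 2*M*(l*|s - s'|) := by
      refine (hh_mul_sub _ _ _ _).trans ?_
      have b1 : |Wf γ₁ γ₂ lam y s - Wf γ₁ γ₂ lam y s'| * |φ₁ s|
          ≤ ((11/5)*L*|s - s'|) * m :=
        mul_le_mul hWd (hf1b s hs) (abs_nonneg _) (by positivity)
      have b2 : |Wf γ₁ γ₂ lam y s'| * |φ₁ s - φ₁ s'| ≤ (2*M) * (l*|s - s'|) := by
        apply mul_le_mul _ (hf1lip s hs s' hs') (abs_nonneg _) (by positivity)
        rw [abs_of_nonneg (hWnn y s')]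
        exact hWb y s' hs'
      linarith
    have hrb : |Wf γ₁ γ₂ lam y s' * qg γ₁ γ₂ lam y s'| ≤ 2*M := by
      rw [abs_of_nonneg (mul_nonneg (hWnn y s') (hq0 y s' hs'))]
      calc Wf γ₁ γ₂ lam y s' * qg γ₁ γ₂ lam y s' ≤ Wf γ₁ γ₂ lam y s' * 1 :=
            mul_le_mul_of_nonneg_left (hq1 y s' hs') (hWnn y s')
        _ = Wf γ₁ γ₂ lam y s' := mul_one _
        _ ≤ 2*M := hWb y s' hs'
    have t2 : |(Wf γ₁ γ₂ lam y s * qg γ₁ γ₂ lam y s) * (φ₂ (lam s) - φ₁ s)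
        - (Wf γ₁ γ₂ lam y s' * qg γ₁ γ₂ lam y s') * (φ₂ (lam s') - φ₁ s')|
        ≤ ((33/5)*L*|s - s'|)*(2*m) + 2*M*((11/5)*l*|s - s'|) := by
      refine (hh_mul_sub _ _ _ _).trans ?_
      have b1 : |Wf γ₁ γ₂ lam y s * qg γ₁ γ₂ lam y s
            - Wf γ₁ γ₂ lam y s' * qg γ₁ γ₂ lam y s'| * |φ₂ (lam s) - φ₁ s|
          ≤ ((33/5)*L*|s - s'|) * (2*m) :=
        mul_le_mul hrd (hf21b s hs) (abs_nonneg _) (by positivity)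
      have b2 : |Wf γ₁ γ₂ lam y s' * qg γ₁ γ₂ lam y s'|
            * |(φ₂ (lam s) - φ₁ s) - (φ₂ (lam s') - φ₁ s')|
          ≤ (2*M) * ((11/5)*l*|s - s'|) :=
        mul_le_mul hrb (hf21lip s hs s' hs') (abs_nonneg _) (by positivity)
      linarith
    have hdecomp : Ef γ₁ γ₂ φ₁ φ₂ lam y s - Ef γ₁ γ₂ φ₁ φ₂ lam y s'
        = 4*(Wf γ₁ γ₂ lam y s * φ₁ s - Wf γ₁ γ₂ lam y s' * φ₁ s')
          + 2*((Wf γ₁ γ₂ lam y s * qg γ₁ γ₂ lam y s) * (φ₂ (lam s) - φ₁ s)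
            - (Wf γ₁ γ₂ lam y s' * qg γ₁ γ₂ lam y s') * (φ₂ (lam s') - φ₁ s')) := by
      simp only [Ef]; ring
    have habs : |Ef γ₁ γ₂ φ₁ φ₂ lam y s - Ef γ₁ γ₂ φ₁ φ₂ lam y s'|
        ≤ 4*((11/5)*L*|s - s'| *m + 2*M*(l*|s - s'|))
          + 2*(((33/5)*L*|s - s'|)*(2*m) + 2*M*((11/5)*l*|s - s'|)) := by
      rw [hdecomp]
      calc |4*(Wf γ₁ γ₂ lam y s * φ₁ s - Wf γ₁ γ₂ lam y s' * φ₁ s')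
          + 2*((Wf γ₁ γ₂ lam y s * qg γ₁ γ₂ lam y s) * (φ₂ (lam s) - φ₁ s)
            - (Wf γ₁ γ₂ lam y s' * qg γ₁ γ₂ lam y s') * (φ₂ (lam s') - φ₁ s'))|
          ≤ |4*(Wf γ₁ γ₂ lam y s * φ₁ s - Wf γ₁ γ₂ lam y s' * φ₁ s')|
            + |2*((Wf γ₁ γ₂ lam y s * qg γ₁ γ₂ lam y s) * (φ₂ (lam s) - φ₁ s)
            - (Wf γ₁ γ₂ lam y s' * qg γ₁ γ₂ lam y s') * (φ₂ (lam s') - φ₁ s'))| := abs_add_le _ _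
        _ ≤ 4*((11/5)*L*|s - s'| *m + 2*M*(l*|s - s'|))
            + 2*(((33/5)*L*|s - s'|)*(2*m) + 2*M*((11/5)*l*|s - s'|)) := by
            rw [abs_mul, abs_mul, show |(4:ℝ)| = 4 from by norm_num,
              show |(2:ℝ)| = 2 from by norm_num]
            linarith
    have hc : (176/5)*(L*m) + (84/5)*(M*l) ≤ 4/5 := by
      have h1 : (0:ℝ) ≤ M*l := mul_nonneg hM0 hl0
      linarith
    have hcs := mul_le_mul_of_nonneg_right hc (abs_nonneg (s - s'))
    linarith [habs, hcs]
  have hTmono : ∀ y : ℝ, ∀ s ∈ Icc (0:ℝ) tb, ∀ s' ∈ Icc (0:ℝ) tb, s ≤ s' →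
      1/5*(s' - s) ≤ Tf γ₁ γ₂ φ₁ φ₂ lam y s' - Tf γ₁ γ₂ φ₁ φ₂ lam y s := by
    intro y s hs s' hs' hss
    have hE := hEs y s hs s' hs'
    have h1 : |s - s'| = s' - s := by rw [abs_sub_comm, abs_of_nonneg (by linarith)]
    rw [h1] at hE
    have h2 := abs_le.mp hE
    simp only [Tf]
    linarith [h2.1, h2.2]
  have hTl9 : ∀ y : ℝ, ∀ s ∈ Icc (0:ℝ) tb, ∀ s' ∈ Icc (0:ℝ) tb,
      |Tf γ₁ γ₂ φ₁ φ₂ lam y s - Tf γ₁ γ₂ φ₁ φ₂ lam y s'| ≤ 9/5*|s - s'| := by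
    intro y s hs s' hs'
    have hE := hEs y s hs s' hs'
    have h2 := abs_le.mp hE
    have h3 := le_abs_self (s - s')
    have h4 := neg_abs_le (s - s')
    have h5 : Tf γ₁ γ₂ φ₁ φ₂ lam y s - Tf γ₁ γ₂ φ₁ φ₂ lam y s'
        = (s - s') - (Ef γ₁ γ₂ φ₁ φ₂ lam y s - Ef γ₁ γ₂ φ₁ φ₂ lam y s') := by
      simp only [Tf]; ring
    rw [abs_le, h5]
    constructor <;> linarith [h2.1, h2.2]
  have hT0 : ∀ y : ℝ, Tf γ₁ γ₂ φ₁ φ₂ lam y 0 = 0 := by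
    intro y
    have hdl0 : dlf γ₁ γ₂ lam 0 = 0 := by simp [dlf, hlam0, hγ₂0, hγ₁0]
    have hW0 : Wf γ₁ γ₂ lam y 0 = 0 := by
      simp only [Wf, hdl0]
      exact max_eq_left (min_le_right _ _)
    simp [Tf, Ef, hW0]
  have hTtb : ∀ y : ℝ, Tf γ₁ γ₂ φ₁ φ₂ lam y tb = tb := by
    intro y
    have hdl0 : dlf γ₁ γ₂ lam tb = 0 := by simp [dlf, hlamt, hγ₂t, hγ₁t]
    have hW0 : Wf γ₁ γ₂ lam y tb = 0 := by
      simp only [Wf, hdl0]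
      exact max_eq_left (min_le_right _ _)
    simp [Tf, Ef, hW0]
  have hTrange : ∀ y : ℝ, ∀ s ∈ Icc (0:ℝ) tb, Tf γ₁ γ₂ φ₁ φ₂ lam y s ∈ Icc (0:ℝ) tb := by
    intro y s hs
    constructor
    · have := hTmono y 0 h0m s hs hs.1
      rw [hT0 y] at this
      linarith [hs.1]
    · have := hTmono y s hs tb htbm hs.2
      rw [hTtb y] at this
      linarith [hs.2]
  have hTy : ∀ s ∈ Icc (0:ℝ) tb, ∀ y y' : ℝ,
      |Tf γ₁ γ₂ φ₁ φ₂ lam y s - Tf γ₁ γ₂ φ₁ φ₂ lam y' s| ≤ 12*m*|y - y'| := by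
    intro s hs y y'
    have hWd : |Wf γ₁ γ₂ lam y s - Wf γ₁ γ₂ lam y' s| ≤ |y - y'| := by
      have := hWdiff y y' s hs s hs
      simpa using this
    have hrd : |Wf γ₁ γ₂ lam y s * qg γ₁ γ₂ lam y s
        - Wf γ₁ γ₂ lam y' s * qg γ₁ γ₂ lam y' s| ≤ 2*|y - y'| := by
      have h0 := qr_mul_diff (hWnn y s) (hWled y s hs) (hWnn y' s) (hWled y' s hs)
      simp only [qg, sub_self, abs_zero] at h0 ⊢
      linarith
    have t1 : |Wf γ₁ γ₂ lam y s * φ₁ s - Wf γ₁ γ₂ lam y' s * φ₁ s|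
        ≤ |y - y'| * m := by
      rw [show Wf γ₁ γ₂ lam y s * φ₁ s - Wf γ₁ γ₂ lam y' s * φ₁ s
        = (Wf γ₁ γ₂ lam y s - Wf γ₁ γ₂ lam y' s) * φ₁ s from by ring, abs_mul]
      exact mul_le_mul hWd (hf1b s hs) (abs_nonneg _) (abs_nonneg _)
    have t2 : |(Wf γ₁ γ₂ lam y s * qg γ₁ γ₂ lam y s) * (φ₂ (lam s) - φ₁ s)
        - (Wf γ₁ γ₂ lam y' s * qg γ₁ γ₂ lam y' s) * (φ₂ (lam s) - φ₁ s)|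
        ≤ (2*|y - y'|) * (2*m) := by
      rw [show (Wf γ₁ γ₂ lam y s * qg γ₁ γ₂ lam y s) * (φ₂ (lam s) - φ₁ s)
        - (Wf γ₁ γ₂ lam y' s * qg γ₁ γ₂ lam y' s) * (φ₂ (lam s) - φ₁ s)
        = (Wf γ₁ γ₂ lam y s * qg γ₁ γ₂ lam y s
          - Wf γ₁ γ₂ lam y' s * qg γ₁ γ₂ lam y' s) * (φ₂ (lam s) - φ₁ s) from by ring,
        abs_mul]
      exact mul_le_mul hrd (hf21b s hs) (abs_nonneg _) (by positivity)
    have hdecomp : Tf γ₁ γ₂ φ₁ φ₂ lam y s - Tf γ₁ γ₂ φ₁ φ₂ lam y' s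
        = -(4*(Wf γ₁ γ₂ lam y s * φ₁ s - Wf γ₁ γ₂ lam y' s * φ₁ s)
          + 2*((Wf γ₁ γ₂ lam y s * qg γ₁ γ₂ lam y s) * (φ₂ (lam s) - φ₁ s)
            - (Wf γ₁ γ₂ lam y' s * qg γ₁ γ₂ lam y' s) * (φ₂ (lam s) - φ₁ s))) := by
      simp only [Tf, Ef]; ring
    rw [hdecomp, abs_neg]
    calc |4*(Wf γ₁ γ₂ lam y s * φ₁ s - Wf γ₁ γ₂ lam y' s * φ₁ s)
          + 2*((Wf γ₁ γ₂ lam y s * qg γ₁ γ₂ lam y s) * (φ₂ (lam s) - φ₁ s)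
            - (Wf γ₁ γ₂ lam y' s * qg γ₁ γ₂ lam y' s) * (φ₂ (lam s) - φ₁ s))|
        ≤ |4*(Wf γ₁ γ₂ lam y s * φ₁ s - Wf γ₁ γ₂ lam y' s * φ₁ s)|
          + |2*((Wf γ₁ γ₂ lam y s * qg γ₁ γ₂ lam y s) * (φ₂ (lam s) - φ₁ s)
            - (Wf γ₁ γ₂ lam y' s * qg γ₁ γ₂ lam y' s) * (φ₂ (lam s) - φ₁ s))| := abs_add_le _ _
      _ ≤ 12*m*|y - y'| := by
          rw [abs_mul, abs_mul, show |(4:ℝ)| = 4 from by norm_num,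
            show |(2:ℝ)| = 2 from by norm_num]
          linarith
  have hWlow : ∀ y : ℝ, ∀ s ∈ Icc (0:ℝ) tb, y - γ₁ s ≤ 0 → Wf γ₁ γ₂ lam y s = 0 := by
    intro y s _ hy
    simp only [Wf]
    exact max_eq_left ((min_le_left _ _).trans hy)
  have hWhigh : ∀ y : ℝ, ∀ s ∈ Icc (0:ℝ) tb, dlf γ₁ γ₂ lam s ≤ y - γ₁ s →
      Wf γ₁ γ₂ lam y s = dlf γ₁ γ₂ lam s := by
    intro y s hs hy
    simp only [Wf]
    rw [min_eq_right hy]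
    exact max_eq_right (hdlnn s hs)
  have hTlow : ∀ y : ℝ, ∀ s ∈ Icc (0:ℝ) tb, y - γ₁ s ≤ 0 → Tf γ₁ γ₂ φ₁ φ₂ lam y s = s := by
    intro y s hs hy
    simp [Tf, Ef, hWlow y s hs hy]
  have hThigh : ∀ y : ℝ, ∀ s ∈ Icc (0:ℝ) tb, dlf γ₁ γ₂ lam s ≤ y - γ₁ s →
      Tf γ₁ γ₂ φ₁ φ₂ lam y s = lam s := by
    intro y s hs hy
    have hW := hWhigh y s hs hy
    have hQ := hQs s hs
    by_cases hdl : dlf γ₁ γ₂ lam s = 0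
    · have hls : lam s = s := by
        have h1 : γ₂ (lam s) - γ₁ s = 0 := hdl
        rw [h1] at hQ
        linarith
      simp [Tf, Ef, hW, hdl, hls]
    · have hq' : qg γ₁ γ₂ lam y s = 1 := by
        simp only [qg, hW]
        exact qratio_self hdl
      simp only [Tf, Ef, hW, hq']
      have h1 : dlf γ₁ γ₂ lam s = γ₂ (lam s) - γ₁ s := rfl
      rw [h1]
      linear_combination -hQ
  have hWmid : ∀ s ∈ Icc (0:ℝ) tb, ∀ h : ℝ, 0 ≤ h → h ≤ 1 →
      Wf γ₁ γ₂ lam ((1-h)*γ₁ s + h*γ₂ (lam s)) s = h * dlf γ₁ γ₂ lam s := by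
    intro s hs h h0 h1
    have hkey : (1-h)*γ₁ s + h*γ₂ (lam s) - γ₁ s = h * dlf γ₁ γ₂ lam s := by
      simp only [dlf]; ring
    simp only [Wf, hkey]
    rw [min_eq_left (by nlinarith [hdlnn s hs]), max_eq_right (mul_nonneg h0 (hdlnn s hs))]
  have hexists : ∀ y t : ℝ, ∃ s, s ∈ Icc (0:ℝ) tb ∧
      Tf γ₁ γ₂ φ₁ φ₂ lam y s = max 0 (min t tb) := by
    intro y t
    have hlip : LipschitzOnWith (2:NNReal) (Tf γ₁ γ₂ φ₁ φ₂ lam y) (Icc (0:ℝ) tb) := by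
      apply LipschitzOnWith.of_dist_le_mul
      intro s hs s' hs'
      rw [Real.dist_eq, Real.dist_eq]
      have h1 := hTl9 y s hs s' hs'
      have h2 : ((2:NNReal):ℝ) = 2 := by norm_num
      rw [h2]
      have := abs_nonneg (s - s')
      linarith
    have hIVT := intermediate_value_Icc htb.le hlip.continuousOn
    rw [hT0 y, hTtb y] at hIVT
    have hmem : max 0 (min t tb) ∈ Icc (0:ℝ) tb :=
      ⟨le_max_left _ _, max_le htb.le (min_le_right _ _)⟩
    obtain ⟨s, hsmem, hval⟩ := hIVT hmem
    exact ⟨s, hsmem, hval⟩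
  choose σ hσmem hσval using hexists
  have huniq : ∀ y s s' : ℝ, s ∈ Icc (0:ℝ) tb → s' ∈ Icc (0:ℝ) tb →
      Tf γ₁ γ₂ φ₁ φ₂ lam y s = Tf γ₁ γ₂ φ₁ φ₂ lam y s' → s = s' := by
    intro y s s' hs hs' heq
    rcases lt_trichotomy s s' with h | h | h
    · have := hTmono y s hs s' hs' h.le
      rw [heq] at this
      linarith
    · exact h
    · have := hTmono y s' hs' s hs h.le
      rw [heq] at this
      linarith
  have hσspec : ∀ y : ℝ, ∀ t ∈ Icc (0:ℝ) tb, Tf γ₁ γ₂ φ₁ φ₂ lam y (σ y t) = t := by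
    intro y t ht
    have := hσval y t
    rwa [min_eq_left ht.2, max_eq_right ht.1] at this
  have hσeq : ∀ y t s : ℝ, t ∈ Icc (0:ℝ) tb → s ∈ Icc (0:ℝ) tb →
      Tf γ₁ γ₂ φ₁ φ₂ lam y s = t → σ y t = s := by
    intro y t s ht hs hT
    exact huniq y (σ y t) s (hσmem y t) hs (by rw [hσspec y t ht, hT])
  have hRho : ∀ s ∈ Icc (0:ℝ) tb, ∀ h : ℝ, 0 ≤ h → h ≤ 1 → 0 < dlf γ₁ γ₂ lam s →
      heisRho γ₁ γ₂ φ₁ φ₂ lam (h, s) =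
        (Ug γ₁ γ₂ φ₁ φ₂ lam ((1-h)*γ₁ s + h*γ₂ (lam s)) s,
         (1-h)*γ₁ s + h*γ₂ (lam s),
         Tf γ₁ γ₂ φ₁ φ₂ lam ((1-h)*γ₁ s + h*γ₂ (lam s)) s
           + 2*((1-h)*γ₁ s + h*γ₂ (lam s))
             * Ug γ₁ γ₂ φ₁ φ₂ lam ((1-h)*γ₁ s + h*γ₂ (lam s)) s) := by
    intro s hs h h0 h1 hdl
    have hW := hWmid s hs h h0 h1
    have hq : qg γ₁ γ₂ lam ((1-h)*γ₁ s + h*γ₂ (lam s)) s = h := by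
      simp only [qg, hW, qratio, if_neg hdl.ne']
      field_simp
    have hQ := hQs s hs
    simp only [heisRho, heisP, Prod.smul_mk, Prod.mk_add_mk, smul_eq_mul, Prod.mk.injEq]
    refine ⟨?_, ?_, ?_⟩
    · simp only [Ug, hq]; ring
    · trivial
    · simp only [Ug, Tf, Ef, hW, hq, dlf]
      linear_combination h * hQ
  refine ⟨fun p => Ug γ₁ γ₂ φ₁ φ₂ lam p.1 (σ p.1 p.2), ?_, ?_, ?_⟩
  · -- (ii) Lipschitz
    have hmidIoo : tb/2 ∈ Ioo (0:ℝ) tb := ⟨by linarith, by linarith⟩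
    have hγmid : 0 < γ₂ (tb/2) := (hsign _ hmidIoo).2
    set c2 : ℝ := 2*γ₂ (tb/2)/tb with hc2_def
    have hc2 : 0 < c2 := by rw [hc2_def]; positivity
    have hconc2 : ∀ τ ∈ Icc (0:ℝ) tb, c2 * min τ (tb - τ) ≤ γ₂ τ := by
      intro τ hτ
      rcases le_total τ (tb/2) with hcase | hcase
      · have hmin : min τ (tb - τ) = τ := min_eq_left (by linarith)
        rw [hmin]
        have ha0 : (0:ℝ) ≤ 2*τ/tb := by
          apply div_nonneg _ htb.le
          linarith [hτ.1]
        have hb0 : (0:ℝ) ≤ 1 - 2*τ/tb := by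
          rw [sub_nonneg]
          rw [div_le_one htb]
          linarith
        have hcomb := hconc.2 (⟨by linarith, by linarith⟩ : tb/2 ∈ Icc (0:ℝ) tb)
          h0m ha0 hb0 (by ring)
        simp only [smul_eq_mul] at hcomb
        have harg : 2*τ/tb * (tb/2) + (1 - 2*τ/tb) * 0 = τ := by field_simp; ring
        rw [harg, hγ₂0, mul_zero, add_zero] at hcomb
        calc c2 * τ = 2*τ/tb * γ₂ (tb/2) := by rw [hc2_def]; field_simp
          _ ≤ γ₂ τ := hcomb
      · have hmin : min τ (tb - τ) = tb - τ := min_eq_right (by linarith)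
        rw [hmin]
        have ha0 : (0:ℝ) ≤ 2*(tb - τ)/tb := by
          have : (0:ℝ) ≤ tb - τ := by linarith [hτ.2]
          positivity
        have hb0 : (0:ℝ) ≤ 1 - 2*(tb - τ)/tb := by
          rw [sub_nonneg, div_le_one htb]
          linarith
        have hcomb := hconc.2 (⟨by linarith, by linarith⟩ : tb/2 ∈ Icc (0:ℝ) tb)
          htbm ha0 hb0 (by ring)
        simp only [smul_eq_mul] at hcomb
        have harg : 2*(tb - τ)/tb * (tb/2) + (1 - 2*(tb - τ)/tb) * tb = τ := by
          field_simp
          ring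
        rw [harg, hγ₂t, mul_zero, add_zero] at hcomb
        calc c2 * (tb - τ) = 2*(tb - τ)/tb * γ₂ (tb/2) := by rw [hc2_def]; field_simp
          _ ≤ γ₂ τ := hcomb
    clear_value c2
    set c3 : ℝ := (5/6)*c2 with hc3_def
    have hc3 : 0 < c3 := by rw [hc3_def]; linarith
    clear_value c3
    have hdl_lb : ∀ s ∈ Icc (0:ℝ) tb, c3*(min s (tb - s)) ≤ dlf γ₁ γ₂ lam s := by
      intro s hs
      have h1 : c2 * min (lam s) (tb - lam s) ≤ γ₂ (lam s) := hconc2 _ (hlmem s hs)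
      have hl1 : (5/6)*s ≤ lam s := by
        have hrev := hlrev s hs 0 h0m
        rw [hlam0, sub_zero, sub_zero, abs_of_nonneg hs.1,
          abs_of_nonneg (hlmem s hs).1] at hrev
        linarith
      have hl2 : (5/6)*(tb - s) ≤ tb - lam s := by
        have hrev := hlrev s hs tb htbm
        rw [hlamt, abs_sub_comm s tb, abs_of_nonneg (by linarith [hs.2] : (0:ℝ) ≤ tb - s),
          abs_sub_comm (lam s) tb,
          abs_of_nonneg (by linarith [(hlmem s hs).2] : (0:ℝ) ≤ tb - lam s)] at hrev
        linarith
      have hminle : (5/6)*min s (tb - s) ≤ min (lam s) (tb - lam s) := by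
        apply le_min
        · calc (5/6)*min s (tb - s) ≤ (5/6)*s :=
                mul_le_mul_of_nonneg_left (min_le_left _ _) (by norm_num)
            _ ≤ lam s := hl1
        · calc (5/6)*min s (tb - s) ≤ (5/6)*(tb - s) :=
                mul_le_mul_of_nonneg_left (min_le_right _ _) (by norm_num)
            _ ≤ tb - lam s := hl2
      have h2 := mul_le_mul_of_nonneg_left hminle hc2.le
      have hg1 := hγ₁np s hs
      have h3 : dlf γ₁ γ₂ lam s = γ₂ (lam s) - γ₁ s := rfl
      rw [h3, hc3_def]
      linarith
    have hf21d : ∀ s ∈ Icc (0:ℝ) tb, |φ₂ (lam s) - φ₁ s| ≤ (11/5)*l*(min s (tb - s)) := by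
      intro s hs
      have hlmem' := hlmem s hs
      have hlam_le : lam s ≤ (6/5)*s := by
        have hl := hllip s hs 0 h0m
        rw [hlam0, sub_zero, sub_zero, abs_of_nonneg hlmem'.1, abs_of_nonneg hs.1] at hl
        linarith
      have hlam_ge : tb - lam s ≤ (6/5)*(tb - s) := by
        have hl := hllip s hs tb htbm
        rw [hlamt, abs_sub_comm (lam s) tb,
          abs_of_nonneg (by linarith [hlmem'.2] : (0:ℝ) ≤ tb - lam s),
          abs_sub_comm s tb, abs_of_nonneg (by linarith [hs.2] : (0:ℝ) ≤ tb - s)] at hl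
        linarith
      have b1 : |φ₂ (lam s) - φ₁ s| ≤ (11/5)*l*s := by
        have e1 : φ₂ (lam s) - φ₁ s = (φ₂ (lam s) - φ₂ 0) + (φ₁ 0 - φ₁ s) := by
          rw [hφ0]; ring
        rw [e1]
        have d1 : |φ₂ (lam s) - φ₂ 0| ≤ l*|lam s - 0| := hf2lip _ hlmem' 0 h0m
        have d2 : |φ₁ 0 - φ₁ s| ≤ l*|0 - s| := hf1lip 0 h0m s hs
        rw [sub_zero, abs_of_nonneg hlmem'.1] at d1
        rw [zero_sub, abs_neg, abs_of_nonneg hs.1] at d2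
        calc |(φ₂ (lam s) - φ₂ 0) + (φ₁ 0 - φ₁ s)|
            ≤ |φ₂ (lam s) - φ₂ 0| + |φ₁ 0 - φ₁ s| := abs_add_le _ _
          _ ≤ (11/5)*l*s := by nlinarith [mul_le_mul_of_nonneg_left hlam_le hl0]
      have b2 : |φ₂ (lam s) - φ₁ s| ≤ (11/5)*l*(tb - s) := by
        have e1 : φ₂ (lam s) - φ₁ s = (φ₂ (lam s) - φ₂ tb) + (φ₁ tb - φ₁ s) := by
          rw [hφt]; ring
        rw [e1]
        have d1 : |φ₂ (lam s) - φ₂ tb| ≤ l*|lam s - tb| := hf2lip _ hlmem' tb htbm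
        have d2 : |φ₁ tb - φ₁ s| ≤ l*|tb - s| := hf1lip tb htbm s hs
        rw [abs_sub_comm (lam s) tb,
          abs_of_nonneg (by linarith [hlmem'.2] : (0:ℝ) ≤ tb - lam s)] at d1
        rw [abs_of_nonneg (by linarith [hs.2] : (0:ℝ) ≤ tb - s)] at d2
        calc |(φ₂ (lam s) - φ₂ tb) + (φ₁ tb - φ₁ s)|
            ≤ |φ₂ (lam s) - φ₂ tb| + |φ₁ tb - φ₁ s| := abs_add_le _ _
          _ ≤ (11/5)*l*(tb - s) := by nlinarith [mul_le_mul_of_nonneg_left hlam_ge hl0]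
      rcases le_total s (tb - s) with hc | hc
      · rw [min_eq_left hc]; exact b1
      · rw [min_eq_right hc]; exact b2
    set C0 : ℝ := 60*m + 5 with hC0_def
    have hC0pos : 0 < C0 := by rw [hC0_def]; linarith
    clear_value C0
    set C6 : ℝ := 1 + (22/5)*L*C0 with hC6_def
    have hC6pos : 0 < C6 := by
      rw [hC6_def]
      nlinarith [mul_nonneg hL0 hC0pos.le]
    clear_value C6
    set CA : ℝ := (11/5)*l*C6/c3 with hCA_def
    have hCA0 : 0 ≤ CA := by
      rw [hCA_def]
      positivity
    clear_value CA
    set Cu : ℝ := l*C0 + (11/5)*l*C0 + CA + 1 with hCu_def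
    have hCu0 : 0 < Cu := by
      rw [hCu_def]
      nlinarith [mul_nonneg hl0 hC0pos.le]
    clear_value Cu
    refine ⟨Real.toNNReal (2*Cu), ?_⟩
    have hsub : closure (lensD γ₁ γ₂ tb) ⊆ univ ×ˢ Icc (0:ℝ) tb := by
      apply closure_minimal
      · rintro ⟨y, t⟩ ⟨htI, _, _⟩
        exact ⟨trivial, htI.1.le, htI.2.le⟩
      · exact isClosed_univ.prod isClosed_Icc
    apply LipschitzOnWith.mono ?_ hsub
    apply LipschitzOnWith.of_dist_le_mul
    intro p hp p' hp'
    obtain ⟨y, t⟩ := p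
    obtain ⟨y', t'⟩ := p'
    have htIcc : t ∈ Icc (0:ℝ) tb := hp.2
    have htIcc' : t' ∈ Icc (0:ℝ) tb := hp'.2
    set s := σ y t with hs_def
    set s' := σ y' t' with hs'_def
    have hsIcc : s ∈ Icc (0:ℝ) tb := hσmem y t
    have hs'Icc : s' ∈ Icc (0:ℝ) tb := hσmem y' t'
    have hTst : Tf γ₁ γ₂ φ₁ φ₂ lam y s = t := hσspec y t htIcc
    have hTst' : Tf γ₁ γ₂ φ₁ φ₂ lam y' s' = t' := hσspec y' t' htIcc'
    clear_value s s'
    set Δ : ℝ := |y - y'| + |t - t'| with hΔ_def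
    have hΔ0 : 0 ≤ Δ := by rw [hΔ_def]; positivity
    clear_value Δ
    have hS1 : |s - s'| ≤ C0 * Δ := by
      have hm1 : 1/5*|s - s'| ≤ |Tf γ₁ γ₂ φ₁ φ₂ lam y' s - Tf γ₁ γ₂ φ₁ φ₂ lam y' s'| := by
        rcases le_total s s' with hc | hc
        · have hmo := hTmono y' s hsIcc s' hs'Icc hc
          have e1 : |s - s'| = s' - s := by
            rw [abs_sub_comm, abs_of_nonneg (by linarith)]
          have e2 := le_abs_self (Tf γ₁ γ₂ φ₁ φ₂ lam y' s' - Tf γ₁ γ₂ φ₁ φ₂ lam y' s)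
          rw [abs_sub_comm] at e2
          rw [e1]
          linarith
        · have hmo := hTmono y' s' hs'Icc s hsIcc hc
          have e1 : |s - s'| = s - s' := abs_of_nonneg (by linarith)
          have e2 := le_abs_self (Tf γ₁ γ₂ φ₁ φ₂ lam y' s - Tf γ₁ γ₂ φ₁ φ₂ lam y' s')
          rw [e1]
          linarith
      have hm2 : |Tf γ₁ γ₂ φ₁ φ₂ lam y' s - Tf γ₁ γ₂ φ₁ φ₂ lam y' s'|
          ≤ 12*m*|y - y'| + |t - t'| := by
        have heq : Tf γ₁ γ₂ φ₁ φ₂ lam y' s - Tf γ₁ γ₂ φ₁ φ₂ lam y' s'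
            = (Tf γ₁ γ₂ φ₁ φ₂ lam y' s - Tf γ₁ γ₂ φ₁ φ₂ lam y s) + (t - t') := by
          rw [hTst, hTst']
          ring
        rw [heq]
        have hTyd := hTy s hsIcc y' y
        have habs : |y' - y| = |y - y'| := abs_sub_comm _ _
        calc |(Tf γ₁ γ₂ φ₁ φ₂ lam y' s - Tf γ₁ γ₂ φ₁ φ₂ lam y s) + (t - t')|
            ≤ |Tf γ₁ γ₂ φ₁ φ₂ lam y' s - Tf γ₁ γ₂ φ₁ φ₂ lam y s| + |t - t'| := abs_add_le _ _
          _ ≤ 12*m*|y - y'| + |t - t'| := by rw [← habs]; linarith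
      have hexp : C0 * Δ = 60*m*|y - y'| + 60*m*|t - t'| + 5*|y - y'| + 5*|t - t'| := by
        rw [hC0_def, hΔ_def]
        ring
      have hnn1 : (0:ℝ) ≤ m*|t - t'| := mul_nonneg hm0 (abs_nonneg _)
      have hnn2 : (0:ℝ) ≤ |y - y'| := abs_nonneg _
      linarith
    have h1 : |φ₁ s - φ₁ s'| ≤ l*(C0*Δ) :=
      (hf1lip s hsIcc s' hs'Icc).trans (mul_le_mul_of_nonneg_left hS1 hl0)
    have h2 : |(φ₂ (lam s) - φ₁ s) - (φ₂ (lam s') - φ₁ s')| ≤ (11/5)*l*(C0*Δ) := by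
      refine (hf21lip s hsIcc s' hs'Icc).trans ?_
      have := mul_le_mul_of_nonneg_left hS1 (by positivity : (0:ℝ) ≤ (11/5)*l)
      linarith
    have hA : |qg γ₁ γ₂ lam y s - qg γ₁ γ₂ lam y' s'| * |φ₂ (lam s) - φ₁ s| ≤ CA * Δ := by
      set ds : ℝ := min s (tb - s) with hds_def
      have hds0 : 0 ≤ ds := le_min hsIcc.1 (by linarith [hsIcc.2])
      clear_value ds
      rcases eq_or_lt_of_le hds0 with hdsz | hdsz
      · have hf0 : |φ₂ (lam s) - φ₁ s| ≤ 0 := by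
          have hb := hf21d s hsIcc
          rw [← hds_def, ← hdsz, mul_zero] at hb
          exact hb
        have hfz : |φ₂ (lam s) - φ₁ s| = 0 := le_antisymm hf0 (abs_nonneg _)
        rw [hfz, mul_zero]
        positivity
      · have hdl3 : c3 * ds ≤ dlf γ₁ γ₂ lam s := by
          have := hdl_lb s hsIcc
          rw [← hds_def] at this
          exact this
        have hdlpos' : 0 < dlf γ₁ γ₂ lam s := lt_of_lt_of_le (mul_pos hc3 hdsz) hdl3
        have hqd := qratio_diff (hWnn y s) (hWled y s hsIcc) (hWnn y' s') (hWled y' s' hs'Icc)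
          hdlpos'
        have hWd := hWdiff y y' s hsIcc s' hs'Icc
        have hdld := hdllip s hsIcc s' hs'Icc
        have hnum : |Wf γ₁ γ₂ lam y s - Wf γ₁ γ₂ lam y' s'|
            + |dlf γ₁ γ₂ lam s - dlf γ₁ γ₂ lam s'| ≤ C6 * Δ := by
          have hb1 : (11/5)*L*|s - s'| ≤ (11/5)*L*(C0*Δ) :=
            mul_le_mul_of_nonneg_left hS1 (by positivity)
          have hyle : |y - y'| ≤ Δ := by
            rw [hΔ_def]
            linarith [abs_nonneg (t - t')]
          have hexp : C6 * Δ = Δ + (22/5)*(L*(C0*Δ)) := by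
            rw [hC6_def]
            ring
          linarith
        have hq_d : |qg γ₁ γ₂ lam y s - qg γ₁ γ₂ lam y' s'| * dlf γ₁ γ₂ lam s ≤ C6 * Δ := by
          simp only [qg]
          exact hqd.trans hnum
        have hq_le : |qg γ₁ γ₂ lam y s - qg γ₁ γ₂ lam y' s'| ≤ C6*Δ / (c3*ds) := by
          rw [le_div_iff₀ (mul_pos hc3 hdsz)]
          have hmono : |qg γ₁ γ₂ lam y s - qg γ₁ γ₂ lam y' s'| * (c3*ds)
              ≤ |qg γ₁ γ₂ lam y s - qg γ₁ γ₂ lam y' s'| * dlf γ₁ γ₂ lam s :=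
            mul_le_mul_of_nonneg_left hdl3 (abs_nonneg _)
          linarith
        have hfd : |φ₂ (lam s) - φ₁ s| ≤ (11/5)*l*ds := by
          have := hf21d s hsIcc
          rwa [← hds_def] at this
        have hmul2 : |qg γ₁ γ₂ lam y s - qg γ₁ γ₂ lam y' s'| * |φ₂ (lam s) - φ₁ s|
            ≤ (C6*Δ / (c3*ds)) * ((11/5)*l*ds) := by
          apply mul_le_mul hq_le hfd (abs_nonneg _)
          positivity
        have hfinal : (C6*Δ / (c3*ds)) * ((11/5)*l*ds) = CA * Δ := by
          rw [hCA_def]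
          field_simp
        rw [hfinal] at hmul2
        exact hmul2
    have hUdecomp : Ug γ₁ γ₂ φ₁ φ₂ lam y s - Ug γ₁ γ₂ φ₁ φ₂ lam y' s'
        = (φ₁ s - φ₁ s') + (qg γ₁ γ₂ lam y s - qg γ₁ γ₂ lam y' s')*(φ₂ (lam s) - φ₁ s)
          + qg γ₁ γ₂ lam y' s' * ((φ₂ (lam s) - φ₁ s) - (φ₂ (lam s') - φ₁ s')) := by
      simp only [Ug]
      ring
    have h3 : |qg γ₁ γ₂ lam y' s' * ((φ₂ (lam s) - φ₁ s) - (φ₂ (lam s') - φ₁ s'))|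
        ≤ (11/5)*l*(C0*Δ) := by
      rw [abs_mul]
      have hq1' : |qg γ₁ γ₂ lam y' s'| ≤ 1 :=
        abs_le.mpr ⟨by linarith [hq0 y' s' hs'Icc], hq1 y' s' hs'Icc⟩
      calc |qg γ₁ γ₂ lam y' s'| * |(φ₂ (lam s) - φ₁ s) - (φ₂ (lam s') - φ₁ s')|
          ≤ 1 * ((11/5)*l*(C0*Δ)) := mul_le_mul hq1' h2 (abs_nonneg _) zero_le_one
        _ = (11/5)*l*(C0*Δ) := one_mul _
    have htotal : |Ug γ₁ γ₂ φ₁ φ₂ lam y s - Ug γ₁ γ₂ φ₁ φ₂ lam y' s'| ≤ Cu * Δ := by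
      rw [hUdecomp]
      have habs2 : |(qg γ₁ γ₂ lam y s - qg γ₁ γ₂ lam y' s')*(φ₂ (lam s) - φ₁ s)|
          = |qg γ₁ γ₂ lam y s - qg γ₁ γ₂ lam y' s'| * |φ₂ (lam s) - φ₁ s| := abs_mul _ _
      have hstep : |(φ₁ s - φ₁ s') + (qg γ₁ γ₂ lam y s - qg γ₁ γ₂ lam y' s')*(φ₂ (lam s) - φ₁ s)
          + qg γ₁ γ₂ lam y' s' * ((φ₂ (lam s) - φ₁ s) - (φ₂ (lam s') - φ₁ s'))|
          ≤ |(φ₁ s - φ₁ s') + (qg γ₁ γ₂ lam y s - qg γ₁ γ₂ lam y' s')*(φ₂ (lam s) - φ₁ s)|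
            + |qg γ₁ γ₂ lam y' s' * ((φ₂ (lam s) - φ₁ s) - (φ₂ (lam s') - φ₁ s'))| :=
        abs_add_le _ _
      have hstep2 : |(φ₁ s - φ₁ s') + (qg γ₁ γ₂ lam y s - qg γ₁ γ₂ lam y' s')*(φ₂ (lam s) - φ₁ s)|
          ≤ |φ₁ s - φ₁ s'| + |(qg γ₁ γ₂ lam y s - qg γ₁ γ₂ lam y' s')*(φ₂ (lam s) - φ₁ s)| :=
        abs_add_le _ _
      have hexp : Cu * Δ = l*(C0*Δ) + CA*Δ + (11/5)*l*(C0*Δ) + Δ := by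
        rw [hCu_def]
        ring
      rw [habs2] at hstep2
      linarith [hA, h1, h3]
    have hdisty : |y - y'| ≤ dist (y, t) (y', t') := by
      rw [Prod.dist_eq, Real.dist_eq]
      exact le_max_left _ _
    have hdistt : |t - t'| ≤ dist (y, t) (y', t') := by
      rw [Prod.dist_eq, Real.dist_eq]
      exact le_max_right _ _
    have hDle : Δ ≤ 2 * dist (y, t) (y', t') := by
      rw [hΔ_def]
      linarith
    have hcoe : ((Real.toNNReal (2*Cu) : NNReal) : ℝ) = 2*Cu :=
      Real.coe_toNNReal _ (by linarith)
    have hCuΔ : Cu * Δ ≤ Cu * (2 * dist (y, t) (y', t')) :=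
      mul_le_mul_of_nonneg_left hDle hCu0.le
    have hgoal : dist (Ug γ₁ γ₂ φ₁ φ₂ lam y s) (Ug γ₁ γ₂ φ₁ φ₂ lam y' s')
        ≤ ((Real.toNNReal (2*Cu) : NNReal) : ℝ) * dist (y, t) (y', t') := by
      rw [Real.dist_eq, hcoe]
      calc |Ug γ₁ γ₂ φ₁ φ₂ lam y s - Ug γ₁ γ₂ φ₁ φ₂ lam y' s'| ≤ Cu * Δ := htotal
        _ ≤ Cu * (2 * dist (y, t) (y', t')) := hCuΔ
        _ = 2*Cu * dist (y, t) (y', t') := by ring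
    exact hgoal
  · -- (i) image equality
    apply Set.eq_of_subset_of_subset
    · rintro p ⟨⟨h, s⟩, ⟨hh, hsI⟩, rfl⟩
      simp only [mem_Ioo] at hh hsI
      have hsIcc : s ∈ Icc (0:ℝ) tb := ⟨hsI.1.le, hsI.2.le⟩
      have hdl := hdlpos s ⟨hsI.1, hsI.2⟩
      have hRhoEq := hRho s hsIcc h hh.1.le hh.2.le hdl
      set y := (1-h)*γ₁ s + h*γ₂ (lam s) with hy_def
      set t := Tf γ₁ γ₂ φ₁ φ₂ lam y s with ht_def
      have htmem : t ∈ Ioo (0:ℝ) tb := by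
        constructor
        · have := hTmono y 0 h0m s hsIcc hsIcc.1
          rw [hT0 y] at this
          rw [ht_def]
          linarith [hsI.1]
        · have := hTmono y s hsIcc tb htbm hsIcc.2
          rw [hTtb y] at this
          rw [ht_def]
          linarith [hsI.2]
      have htIcc : t ∈ Icc (0:ℝ) tb := ⟨htmem.1.le, htmem.2.le⟩
      have hdl' : 0 < γ₂ (lam s) - γ₁ s := hdl
      have hy2 : y < γ₂ (lam s) := by
        rw [hy_def]; nlinarith [hh.2, hdl']
      have hylow : γ₁ s < y := by
        rw [hy_def]; nlinarith [hh.1, hdl']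
      have hb4 : 12*L*m ≤ 3/11 := by linarith
      have hyU : y < γ₂ t := by
        have hT2 : Tf γ₁ γ₂ φ₁ φ₂ lam (γ₂ (lam s)) s = lam s :=
          hThigh _ s hsIcc (by simp only [dlf]; linarith)
        have hTd := hTy s hsIcc (γ₂ (lam s)) y
        rw [hT2] at hTd
        have hA : 0 < γ₂ (lam s) - y := by linarith
        have hb1 : |γ₂ (lam s) - γ₂ t| ≤ L * |lam s - t| :=
          hg2lip _ (hlmem s hsIcc) t htIcc
        have hb2 : |lam s - t| ≤ 12*m*(γ₂ (lam s) - y) := by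
          rw [← abs_of_pos hA]
          exact hTd
        have hb3 : L * |lam s - t| ≤ L * (12*m*(γ₂ (lam s) - y)) :=
          mul_le_mul_of_nonneg_left hb2 hL0
        have hb5 : (12*L*m) * (γ₂ (lam s) - y) ≤ (3/11) * (γ₂ (lam s) - y) :=
          mul_le_mul_of_nonneg_right hb4 hA.le
        have hb6 := (abs_le.mp hb1).2
        nlinarith
      have hyL : γ₁ t < y := by
        have hT1 : Tf γ₁ γ₂ φ₁ φ₂ lam (γ₁ s) s = s := hTlow _ s hsIcc (by linarith)
        have hTd := hTy s hsIcc y (γ₁ s)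
        rw [hT1] at hTd
        have hA : 0 < y - γ₁ s := by linarith
        have hb1 : |γ₁ t - γ₁ s| ≤ L * |t - s| := hg1lip t htIcc s hsIcc
        have hb2 : |t - s| ≤ 12*m*(y - γ₁ s) := by
          rw [← abs_of_pos hA]
          exact hTd
        have hb3 : L * |t - s| ≤ L * (12*m*(y - γ₁ s)) :=
          mul_le_mul_of_nonneg_left hb2 hL0
        have hb5 : (12*L*m) * (y - γ₁ s) ≤ (3/11) * (y - γ₁ s) :=
          mul_le_mul_of_nonneg_right hb4 hA.le
        have hb6 := (abs_le.mp hb1).2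
        nlinarith
      refine ⟨(y, t), ⟨htmem, hyL, hyU⟩, ?_⟩
      have hσt : σ y t = s := hσeq y t s htIcc hsIcc rfl
      show (Ug γ₁ γ₂ φ₁ φ₂ lam y (σ y t), y, t + 2*y*Ug γ₁ γ₂ φ₁ φ₂ lam y (σ y t))
        = heisRho γ₁ γ₂ φ₁ φ₂ lam (h, s)
      rw [hσt, hRhoEq]
    · rintro p ⟨⟨y, t⟩, hmemD, rfl⟩
      obtain ⟨htI, hy1, hy2⟩ := hmemD
      have htIcc : t ∈ Icc (0:ℝ) tb := ⟨htI.1.le, htI.2.le⟩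
      set s := σ y t with hs_def
      have hsIcc : s ∈ Icc (0:ℝ) tb := hσmem y t
      have hTst : Tf γ₁ γ₂ φ₁ φ₂ lam y s = t := hσspec y t htIcc
      have hs0 : 0 < s := by
        rcases eq_or_lt_of_le hsIcc.1 with h0 | h0
        · exfalso
          rw [← h0, hT0 y] at hTst
          exact absurd hTst.symm (ne_of_gt htI.1)
        · exact h0
      have hstb : s < tb := by
        rcases eq_or_lt_of_le hsIcc.2 with h0 | h0
        · exfalso
          rw [h0, hTtb y] at hTst
          exact absurd hTst (ne_of_gt htI.2)
        · exact h0
      have hsIoo : s ∈ Ioo (0:ℝ) tb := ⟨hs0, hstb⟩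
      have hdl := hdlpos s hsIoo
      have hW1 : 0 < y - γ₁ s := by
        by_contra hcon
        push_neg at hcon
        have hTT := hTlow y s hsIcc hcon
        rw [hTT] at hTst
        rw [hTst] at hcon
        linarith
      have hW2 : y - γ₁ s < dlf γ₁ γ₂ lam s := by
        by_contra hcon
        push_neg at hcon
        have hTT := hThigh y s hsIcc hcon
        rw [hTT] at hTst
        have hdlt : dlf γ₁ γ₂ lam s = γ₂ t - γ₁ s := by
          simp only [dlf, hTst]
        rw [hdlt] at hcon
        linarith
      set h := (y - γ₁ s) / dlf γ₁ γ₂ lam s with hh_def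
      have hh0 : 0 < h := div_pos hW1 hdl
      have hh1 : h < 1 := (div_lt_one hdl).mpr hW2
      have hy_eq : (1-h)*γ₁ s + h*γ₂ (lam s) = y := by
        have hmul : h * dlf γ₁ γ₂ lam s = y - γ₁ s := by
          rw [hh_def]
          field_simp
        simp only [dlf] at hmul
        nlinarith [hmul]
      have hRhoEq := hRho s hsIcc h hh0.le hh1.le hdl
      rw [hy_eq] at hRhoEq
      refine ⟨(h, s), ⟨⟨hh0, hh1⟩, hsIoo⟩, ?_⟩
      rw [hRhoEq, hTst]
  · -- (iii) boundary values
    intro s hs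
    constructor
    · have hT : Tf γ₁ γ₂ φ₁ φ₂ lam (γ₁ s) s = s := hTlow (γ₁ s) s hs (by linarith)
      have hσ : σ (γ₁ s) s = s := hσeq (γ₁ s) s s hs hs hT
      show Ug γ₁ γ₂ φ₁ φ₂ lam (γ₁ s) (σ (γ₁ s) s) = φ₁ s
      rw [hσ]
      have hW0 : Wf γ₁ γ₂ lam (γ₁ s) s = 0 := hWlow (γ₁ s) s hs (by linarith)
      simp [Ug, qg, hW0, qratio_zero]
    · obtain ⟨s', hs', hls⟩ := hlam_bij.surjOn hs
      have hdl_eq : dlf γ₁ γ₂ lam s' = γ₂ s - γ₁ s' := by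
        simp only [dlf, hls]
      have hge : dlf γ₁ γ₂ lam s' ≤ γ₂ s - γ₁ s' := le_of_eq hdl_eq
      have hT : Tf γ₁ γ₂ φ₁ φ₂ lam (γ₂ s) s' = s := by
        rw [hThigh (γ₂ s) s' hs' hge, hls]
      have hσ : σ (γ₂ s) s = s' := hσeq (γ₂ s) s s' hs hs' hT
      show Ug γ₁ γ₂ φ₁ φ₂ lam (γ₂ s) (σ (γ₂ s) s) = φ₂ s
      rw [hσ]
      have hW : Wf γ₁ γ₂ lam (γ₂ s) s' = dlf γ₁ γ₂ lam s' := hWhigh (γ₂ s) s' hs' hge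
      by_cases hdl : dlf γ₁ γ₂ lam s' = 0
      · have hq0' : qg γ₁ γ₂ lam (γ₂ s) s' = 0 := by
          simp [qg, hW, hdl, qratio_zero]
        have hend : s' = 0 ∨ s' = tb := by
          by_contra hcon
          push_neg at hcon
          have hio : s' ∈ Ioo (0:ℝ) tb :=
            ⟨lt_of_le_of_ne hs'.1 (Ne.symm hcon.1), lt_of_le_of_ne hs'.2 hcon.2⟩
          exact absurd hdl (ne_of_gt (hdlpos s' hio))
        simp only [Ug, hq0', zero_mul, add_zero]
        rcases hend with h0' | ht'
        · have hseq : s = 0 := by rw [← hls, h0', hlam0]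
          rw [h0', hseq]
          exact hφ0
        · have hseq : s = tb := by rw [← hls, ht', hlamt]
          rw [ht', hseq]
          exact hφt
      · have hq1' : qg γ₁ γ₂ lam (γ₂ s) s' = 1 := by
          simp only [qg, hW]
          exact qratio_self hdl
        simp only [Ug, hq1', one_mul, hls]
        ring
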